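/- Let u be a w-bubble and let I be a nonempty subset of {1, …, n}. Then Σ_{i ∈ I} w_i u_i ≤ d_w + (|I| − 1)·lcm{w_i : i ∈ I} − Σ_{i ∈ I} w_i. -/

import Mathlib

/-- The weighted dot product `w · u = ∑ i, w i * u i`. -/
def dotW {n : ℕ} (w u : Fin n → ℕ) : ℕ := ∑ i, w i * u i

/-- `d_w`, the least common multiple of the weights. -/
def lcmW {n : ℕ} (w : Fin n → ℕ) : ℕ := Finset.univ.lcm w

/-- `u` is a `w`-bubble: `w · u ≥ 2 d_w` and there is no `v ⪯ u` with `w · v = d_w`. -/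
def IsBubble {n : ℕ} (w u : Fin n → ℕ) : Prop :=
  2 * lcmW w ≤ dotW w u ∧
    ¬ ∃ v : Fin n → ℕ, (∀ i, v i ≤ u i) ∧ dotW w v = lcmW w

lemma key_rep {n : ℕ} (w : Fin n → ℕ) (I : Finset (Fin n)) :
    ∀ T : ℕ, I.lcm w ∣ T → ∀ u : Fin n → ℕ,
      T + (I.card - 1) * I.lcm w < ∑ i ∈ I, w i * (u i + 1) →
      ∃ v : Fin n → ℕ, (∀ i, v i ≤ u i) ∧ (∀ i ∉ I, v i = 0) ∧ ∑ i ∈ I, w i * v i = T := by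
  intro T
  induction T using Nat.strong_induction_on with
  | _ T ih =>
  intro hT u h
  set L := I.lcm w with hLdef
  rcases Nat.eq_zero_or_pos T with rfl | hTpos
  · exact ⟨fun _ => 0, fun _ => Nat.zero_le _, fun _ _ => rfl, by simp⟩
  have hLpos : 0 < L := Nat.pos_of_dvd_of_pos hT hTpos
  have hLT : L ≤ T := Nat.le_of_dvd hTpos hT
  have hIne : I.Nonempty := by
    by_contra hc
    rw [Finset.not_nonempty_iff_eq_empty] at hc
    simp [hc] at h
  have hk : 1 ≤ I.card := hIne.card_pos
  -- find an index i with L ≤ w i * u i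
  have hex : ∃ i ∈ I, L ≤ w i * u i := by
    by_contra hc
    push_neg at hc
    have hb : ∀ i ∈ I, w i * (u i + 1) ≤ L := by
      intro i hi
      obtain ⟨m, hm⟩ := Finset.dvd_lcm hi (f := w)
      rw [← hLdef] at hm
      have hlt := hc i hi
      rw [hm] at hlt ⊢
      have hum : u i < m := lt_of_mul_lt_mul_left hlt (Nat.zero_le _)
      exact Nat.mul_le_mul_left _ hum
    have hsum : ∑ i ∈ I, w i * (u i + 1) ≤ I.card * L := by
      calc ∑ i ∈ I, w i * (u i + 1) ≤ ∑ _i ∈ I, L := Finset.sum_le_sum hb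
        _ = I.card * L := by rw [Finset.sum_const, smul_eq_mul]
    have hcard : I.card * L = L + (I.card - 1) * L := by
      obtain ⟨c, hc'⟩ := Nat.exists_eq_add_of_le hk
      rw [hc']
      simp [Nat.add_sub_cancel_left, add_mul]
    omega
  obtain ⟨i, hi, hiL⟩ := hex
  obtain ⟨m, hm⟩ := Finset.dvd_lcm hi (f := w)
  rw [← hLdef] at hm
  have hwpos : 0 < w i := by
    rcases Nat.eq_zero_or_pos (w i) with h0 | h0
    · rw [h0, Nat.zero_mul] at hm; omega
    · exact h0
  have hcu : m ≤ u i := by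
    have : w i * m ≤ w i * u i := hm ▸ hiL
    exact Nat.le_of_mul_le_mul_left this hwpos
  set u' := Function.update u i (u i - m) with hu'
  have herase : ∀ j ∈ I.erase i, w j * (u' j + 1) = w j * (u j + 1) := by
    intro j hj
    rw [hu', Function.update_of_ne (Finset.ne_of_mem_erase hj)]
  have hterm : w i * (u' i + 1) + w i * m = w i * (u i + 1) := by
    rw [hu', Function.update_self, ← Nat.mul_add]
    congr 1
    omega
  have hsum' : ∑ j ∈ I, w j * (u' j + 1) + L = ∑ j ∈ I, w j * (u j + 1) := by
    rw [← Finset.sum_erase_add I _ hi, ← Finset.sum_erase_add I (fun j => w j * (u j + 1)) hi,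
      Finset.sum_congr rfl herase, hm]
    omega
  have hLsum : L ≤ ∑ j ∈ I, w j * (u j + 1) := by
    calc L ≤ w i * u i := hiL
      _ ≤ w i * (u i + 1) := Nat.mul_le_mul_left _ (Nat.le_succ _)
      _ ≤ ∑ j ∈ I, w j * (u j + 1) :=
        Finset.single_le_sum (f := fun j => w j * (u j + 1)) (fun j _ => Nat.zero_le _) hi
  have h' : (T - L) + (I.card - 1) * L < ∑ j ∈ I, w j * (u' j + 1) := by omega
  obtain ⟨v', hv1, hv2, hv3⟩ := ih (T - L) (by omega) (Nat.dvd_sub hT dvd_rfl) u' h'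
  refine ⟨Function.update v' i (v' i + m), ?_, ?_, ?_⟩
  · intro j
    rcases eq_or_ne j i with rfl | hne
    · rw [Function.update_self]
      have := hv1 j
      rw [hu', Function.update_self] at this
      omega
    · rw [Function.update_of_ne hne]
      have := hv1 j
      rwa [hu', Function.update_of_ne hne] at this
  · intro j hj
    rw [Function.update_of_ne (by rintro rfl; exact hj hi), ]
    exact hv2 j hj
  · rw [← Finset.sum_erase_add I _ hi]
    rw [← Finset.sum_erase_add I (fun j => w j * v' j) hi] at hv3
    have hre : ∀ j ∈ I.erase i, w j * Function.update v' i (v' i + m) j = w j * v' j := by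
      intro j hj
      rw [Function.update_of_ne (Finset.ne_of_mem_erase hj)]
    rw [Finset.sum_congr rfl hre, Function.update_self, Nat.mul_add]
    have hwm : w i * m = L := hm.symm
    omega

theorem bubble_subset_sum_le {n : ℕ} (hn : 0 < n) (w : Fin n → ℕ) (hw : ∀ i, 0 < w i)
    (u : Fin n → ℕ) (hu : IsBubble w u) (I : Finset (Fin n)) (hI : I.Nonempty) :
    ((∑ i ∈ I, w i * u i : ℕ) : ℤ) ≤
      (lcmW w : ℤ) + ((I.card : ℤ) - 1) * ((I.lcm w : ℕ) : ℤ) - ((∑ i ∈ I, w i : ℕ) : ℤ) := by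
  by_contra h
  push_neg at h
  have hk : 1 ≤ I.card := hI.card_pos
  have hdvd : I.lcm w ∣ lcmW w :=
    Finset.lcm_dvd (fun b _ => Finset.dvd_lcm (Finset.mem_univ b))
  have hsplit : ∑ i ∈ I, w i * (u i + 1) = (∑ i ∈ I, w i * u i) + ∑ i ∈ I, w i := by
    rw [← Finset.sum_add_distrib]
    exact Finset.sum_congr rfl (fun i _ => by ring)
  have hnat : lcmW w + (I.card - 1) * I.lcm w < ∑ i ∈ I, w i * (u i + 1) := by
    have hcast : ((I.card : ℤ) - 1) = ((I.card - 1 : ℕ) : ℤ) := by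
      rw [Nat.cast_sub hk]; simp
    rw [hcast] at h
    have : (↑(lcmW w + (I.card - 1) * I.lcm w) : ℤ) < ↑((∑ i ∈ I, w i * u i) + ∑ i ∈ I, w i) := by
      push_cast
      push_cast at h
      linarith
    rw [← hsplit] at this
    exact_mod_cast this
  obtain ⟨v, hv1, hv2, hv3⟩ := key_rep w I (lcmW w) hdvd u hnat
  exact hu.2 ⟨v, hv1, by
    unfold dotW
    rw [← Finset.sum_subset (Finset.subset_univ I) (fun x _ hx => by rw [hv2 x hx, Nat.mul_zero])]
    exact hv3⟩
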